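/- arXiv:2006.06970 — 2 statements merged into one kernel-verified Lean document; each statement's English description precedes it below -/
import Mathlib

section
/- If V(n) = p⌊nφ⌋ + qn + r is a generalized Beatty sequence with integer parameters (p,q,r) and φ the golden ratio, then V∘B is a generalized Beatty sequence with parameters (2p+q, p+q, r), i.e., V(B(n)) = (2p+q)⌊nφ⌋ + (p+q)n + r for all n ≥ 1, where B(n) = ⌊nφ²⌋. -/
noncomputable def phi : ℝ := (1 + Real.sqrt 5) / 2

/-- Lower Wythoff sequence. -/
noncomputable def A (n : ℕ) : ℕ := (⌊(n : ℝ) * phi⌋).toNat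

/-- Upper Wythoff sequence. -/
noncomputable def B (n : ℕ) : ℕ := (⌊(n : ℝ) * phi ^ 2⌋).toNat

/-- `d` is the digit sequence of the Zeckendorf expansion of `N`:
digits are 0/1, no two consecutive 1's, finitely many nonzero digits,
and `N = Σ dᵢ · F_{i+2}`. -/
def IsZeck (N : ℕ) (d : ℕ → ℕ) : Prop :=
  (∀ i, d i ≤ 1) ∧ (∀ i, ¬(d i = 1 ∧ d (i + 1) = 1)) ∧
  (Function.support d).Finite ∧ N = ∑ᶠ i, d i * Nat.fib (i + 2)

lemma phi_gt_one : (1:ℝ) < phi := by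
  have hs : Real.sqrt 5 ^ 2 = 5 := Real.sq_sqrt (by norm_num)
  have := Real.sqrt_nonneg 5
  unfold phi; nlinarith

lemma phi_lt_two : phi < 2 := by
  have hs : Real.sqrt 5 ^ 2 = 5 := Real.sq_sqrt (by norm_num)
  have := Real.sqrt_nonneg 5
  unfold phi; nlinarith

lemma phi_sq : phi ^ 2 = phi + 1 := by
  have hs : Real.sqrt 5 ^ 2 = 5 := Real.sq_sqrt (by norm_num)
  unfold phi; nlinarith

lemma phi_irrational : Irrational phi := by
  have h5 : Irrational (Real.sqrt 5) := by
    have : Nat.Prime 5 := by norm_num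
    simpa using this.irrational_sqrt
  have h2 : Irrational ((((1:ℤ):ℝ) + Real.sqrt 5) / ((2:ℤ):ℝ)) :=
    (h5.intCast_add 1).div_intCast (m := 2) (by norm_num)
  simpa [phi] using h2

/-- If V is a generalized Beatty sequence with parameters (p,q,r), then V∘B is a
generalized Beatty sequence with parameters (2p+q, p+q, r). -/
theorem gbs_comp_B (p q r : ℤ) (V : ℕ → ℤ)
    (hV : ∀ n : ℕ, V n = p * (A n : ℤ) + q * n + r) :
    ∀ n : ℕ, 1 ≤ n → V (B n) = (2 * p + q) * (A n : ℤ) + (p + q) * n + r := by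
  intro n hn
  have hphi1 := phi_gt_one
  have hphi2 := phi_lt_two
  have hsq := phi_sq
  have hnpos : (0:ℝ) < n := by exact_mod_cast hn
  set a : ℤ := ⌊(n:ℝ) * phi⌋ with ha
  have ha0 : 0 ≤ a := Int.floor_nonneg.2 (by positivity)
  have hA : (A n : ℤ) = a := by
    simp only [A]; rw [← ha]; exact Int.toNat_of_nonneg ha0
  have hBf : ⌊(n:ℝ) * phi ^ 2⌋ = a + n := by
    rw [hsq, mul_add, mul_one]
    exact Int.floor_add_natCast _ n
  have hB : (B n : ℤ) = a + n := by
    simp [B, hBf, Int.toNat_of_nonneg (by positivity : (0:ℤ) ≤ a + n)]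
  -- fractional part bounds
  have hfl : (a:ℝ) ≤ (n:ℝ) * phi := Int.floor_le _
  have hne : (n:ℝ) * phi ≠ (a:ℝ) := by
    have : Irrational ((n:ℝ) * phi) := phi_irrational.natCast_mul (by omega)
    exact this.ne_int a
  have hflt : (a:ℝ) < (n:ℝ) * phi := lt_of_le_of_ne hfl (Ne.symm hne)
  have hlt1 : (n:ℝ) * phi < a + 1 := Int.lt_floor_add_one _
  -- A (B n) = 2a + n
  have hcast : ((B n : ℕ) : ℝ) = (a:ℝ) + n := by
    have := hB
    push_cast at this ⊢
    exact_mod_cast this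
  have hABfloor : ⌊((B n : ℕ) : ℝ) * phi⌋ = 2 * a + n := by
    rw [hcast]
    rw [Int.floor_eq_iff]
    constructor
    · push_cast
      nlinarith [mul_pos (sub_pos.2 hflt) (sub_pos.2 hphi2)]
    · push_cast
      nlinarith [mul_pos (sub_pos.2 hlt1) (sub_pos.2 hphi2),
        mul_pos (sub_pos.2 hflt) (sub_pos.2 hphi1)]
  have hAB : (A (B n) : ℤ) = 2 * a + n := by
    simp [A, hABfloor, Int.toNat_of_nonneg (by omega : (0:ℤ) ≤ 2 * a + n)]
  rw [hV, hAB, hB, hA]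
  ring
end

section
/- The set of natural numbers N whose Zeckendorf expansion ends in the digit d_0 = 1 is exactly {A(A(n)) : n ≥ 1} = {⌊nφ⌋ + n − 1 : n ≥ 1}, where A(n) = ⌊nφ⌋; equivalently A∘A = B − 1 where B(n) = ⌊nφ²⌋. -/
open Real Finset

local notation "φ" => goldenRatio
local notation "ψ" => goldenConj

lemma phi_eq : phi = goldenRatio := rfl

/-- Basic bound on alternating-sign 0/1 weighted geometric sums with ratio ψ. -/
lemma bound_aux : ∀ (K : ℕ) (d : ℕ → ℕ), (∀ i, d i ≤ 1) →
    -1 < ∑ i ∈ range K, (d i : ℝ) * ψ ^ i ∧ ∑ i ∈ range K, (d i : ℝ) * ψ ^ i < φ := by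
  intro K
  induction K with
  | zero =>
    intro d _
    simp only [Finset.range_zero, Finset.sum_empty]
    exact ⟨by norm_num, goldenRatio_pos⟩
  | succ K ih =>
    intro d hd
    obtain ⟨h1, h2⟩ := ih (fun i => d (i + 1)) (fun i => hd (i + 1))
    rw [Finset.sum_range_succ']
    have hrw : ∑ i ∈ range K, (d (i + 1) : ℝ) * ψ ^ (i + 1)
        = ψ * ∑ i ∈ range K, (d (i + 1) : ℝ) * ψ ^ i := by
      rw [Finset.mul_sum]; exact Finset.sum_congr rfl fun i _ => by ring
    rw [hrw]
    have hψ : ψ < 0 := goldenConj_neg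
    have hd0 : (0:ℝ) ≤ (d 0 : ℝ) := Nat.cast_nonneg _
    have hd0' : (d 0 : ℝ) ≤ 1 := by exact_mod_cast hd 0
    have hm1 := mul_lt_mul_of_neg_left h1 hψ
    have hm2 := mul_lt_mul_of_neg_left h2 hψ
    have hgc : φ * ψ = -1 := goldenRatio_mul_goldenConj
    have hsum : φ + ψ = 1 := goldenRatio_add_goldenConj
    constructor
    · simp only [pow_zero, mul_one]; nlinarith
    · simp only [pow_zero, mul_one]; nlinarith

/-- The value `φ - ε·φ²` lies in `(0,1)` when `d₀ = 1` (hence `d₁ = 0`). -/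
lemma val_one (d : ℕ → ℕ) (hd : ∀ i, d i ≤ 1) (hd0 : d 0 = 1) (hd1 : d 1 = 0) (K : ℕ) :
    0 < φ - (∑ i ∈ range (K + 2), (d i : ℝ) * ψ ^ (i + 2)) * φ ^ 2 ∧
      φ - (∑ i ∈ range (K + 2), (d i : ℝ) * ψ ^ (i + 2)) * φ ^ 2 < 1 := by
  obtain ⟨h1, h2⟩ := bound_aux K (fun i => d (i + 1 + 1)) (fun i => hd _)
  set S := ∑ i ∈ range K, (d (i + 1 + 1) : ℝ) * ψ ^ i with hS
  have hsplit : ∑ i ∈ range (K + 2), (d i : ℝ) * ψ ^ (i + 2) = ψ ^ 4 * S + ψ ^ 2 := by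
    have e2 : K + 2 = K + 1 + 1 := rfl
    rw [e2, Finset.sum_range_succ', Finset.sum_range_succ', hd0, hd1]
    push_cast
    rw [hS, Finset.mul_sum]
    have : ∑ i ∈ range K, (d (i + 1 + 1) : ℝ) * ψ ^ (i + 1 + 1 + 2)
        = ∑ i ∈ range K, ψ ^ 4 * ((d (i + 1 + 1) : ℝ) * ψ ^ i) :=
      Finset.sum_congr rfl fun i _ => by ring
    rw [this]; ring
  rw [hsplit]
  have hgc : ψ * φ = -1 := goldenConj_mul_goldenRatio
  have hval : φ - (ψ ^ 4 * S + ψ ^ 2) * φ ^ 2 = -ψ - ψ ^ 2 * S := by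
    linear_combination (-(S * ψ ^ 2 + 1) * (ψ * φ - 1)) * hgc + goldenRatio_add_goldenConj
  rw [hval]
  have hψ : ψ < 0 := goldenConj_neg
  have hp : (0:ℝ) < ψ ^ 2 := by nlinarith
  have hm1 := mul_lt_mul_of_pos_left h1 hp
  have hm2 := mul_lt_mul_of_pos_left h2 hp
  have e2 : ψ ^ 2 * φ = -ψ := by linear_combination ψ * hgc
  have hsq : ψ ^ 2 = ψ + 1 := goldenConj_sq
  constructor <;> linarith

/-- The value `φ - ε·φ²` lies in `(1,φ²)` when `d₀ = 0`. -/
lemma val_zero (d : ℕ → ℕ) (hd : ∀ i, d i ≤ 1) (hd0 : d 0 = 0) (K : ℕ) :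
    1 < φ - (∑ i ∈ range (K + 2), (d i : ℝ) * ψ ^ (i + 2)) * φ ^ 2 ∧
      φ - (∑ i ∈ range (K + 2), (d i : ℝ) * ψ ^ (i + 2)) * φ ^ 2 < φ ^ 2 := by
  obtain ⟨h1, h2⟩ := bound_aux (K + 1) (fun i => d (i + 1)) (fun i => hd _)
  set S := ∑ i ∈ range (K + 1), (d (i + 1) : ℝ) * ψ ^ i with hS
  have hsplit : ∑ i ∈ range (K + 2), (d i : ℝ) * ψ ^ (i + 2) = ψ ^ 3 * S := by
    have e2 : K + 2 = K + 1 + 1 := rfl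
    rw [e2, Finset.sum_range_succ', hd0]
    push_cast
    rw [hS, Finset.mul_sum]
    have : ∑ i ∈ range (K + 1), (d (i + 1) : ℝ) * ψ ^ (i + 1 + 2)
        = ∑ i ∈ range (K + 1), ψ ^ 3 * ((d (i + 1) : ℝ) * ψ ^ i) :=
      Finset.sum_congr rfl fun i _ => by ring
    rw [this]; ring
  rw [hsplit]
  have hgc : ψ * φ = -1 := goldenConj_mul_goldenRatio
  have hval : φ - ψ ^ 3 * S * φ ^ 2 = φ - ψ * S := by
    linear_combination (-(ψ * S) * (ψ * φ - 1)) * hgc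
  rw [hval]
  have hψ : ψ < 0 := goldenConj_neg
  have hm1 := mul_lt_mul_of_neg_left h1 hψ
  have hm2 := mul_lt_mul_of_neg_left h2 hψ
  have hsum : φ + ψ = 1 := goldenRatio_add_goldenConj
  have hsq : φ ^ 2 = φ + 1 := goldenRatio_sq
  constructor <;> linarith

/-- The key identity: there is an integer `nz` with
`m·φ² - (N+1) = (m - nz)·φ² + (φ - ε·φ²)` for all integers `m`. -/
lemma key_identity (N : ℕ) (d : ℕ → ℕ) (K : ℕ)
    (hN : (N : ℝ) = ∑ i ∈ range K, (d i : ℝ) * (Nat.fib (i + 2) : ℝ)) :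
    ∃ nz : ℤ, ∀ m : ℤ, (m : ℝ) * φ ^ 2 - ((N : ℝ) + 1)
      = ((m - nz : ℤ) : ℝ) * φ ^ 2
        + (φ - (∑ i ∈ range K, (d i : ℝ) * ψ ^ (i + 2)) * φ ^ 2) := by
  refine ⟨(2 * N + 1 : ℤ) - (∑ i ∈ range K, d i * Nat.fib (i + 3) : ℕ), fun m => ?_⟩
  have hM : φ * (N : ℝ) = (∑ i ∈ range K, (d i : ℝ) * (Nat.fib (i + 3) : ℝ))
      - ∑ i ∈ range K, (d i : ℝ) * ψ ^ (i + 2) := by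
    rw [hN, Finset.mul_sum, ← Finset.sum_sub_distrib]
    refine Finset.sum_congr rfl fun i _ => ?_
    have h : (Nat.fib (i + 3) : ℝ) - φ * (Nat.fib (i + 2) : ℝ) = ψ ^ (i + 2) :=
      fib_succ_sub_goldenRatio_mul_fib (i + 2)
    linear_combination (-(d i : ℝ)) * h
  push_cast
  linear_combination φ ^ 2 * hM + ((N : ℝ) + 1 - (N : ℝ) * φ) * goldenRatio_sq

lemma isZeck_le {N : ℕ} {d : ℕ → ℕ} (h : IsZeck N d) (i : ℕ) (hi : d i = 1) :
    Nat.fib (i + 2) ≤ N := by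
  obtain ⟨h1, h2, h3, h4⟩ := h
  have hfin : (Function.support fun j => d j * Nat.fib (j + 2)).Finite := by
    refine h3.subset fun j hj => ?_
    simp only [Function.mem_support] at hj ⊢
    intro hdj; exact hj (by simp [hdj])
  have := single_le_finsum i hfin (fun j => Nat.zero_le _)
  rw [← h4] at this
  calc Nat.fib (i + 2) = d i * Nat.fib (i + 2) := by rw [hi, one_mul]
    _ ≤ N := this

/-- Existence of the Zeckendorf expansion. -/
lemma zeck_exists : ∀ N : ℕ, ∃ d : ℕ → ℕ, IsZeck N d := by
  intro N
  induction N using Nat.strong_induction_on with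
  | _ N ih =>
  rcases Nat.eq_zero_or_pos N with rfl | hN
  · refine ⟨fun _ => 0, fun _ => Nat.zero_le 1, fun i => by simp, by simp, by simp⟩
  · have hg2 : 2 ≤ Nat.greatestFib N := Nat.le_greatestFib.2 (by simpa using Nat.one_le_iff_ne_zero.mpr hN.ne')
    set k := Nat.greatestFib N - 2 with hk
    have hgk : Nat.greatestFib N = k + 2 := by omega
    have h1 : Nat.fib (k + 2) ≤ N := by rw [← hgk]; exact Nat.fib_greatestFib_le N
    have h2 : N < Nat.fib (k + 3) := by
      have := Nat.lt_fib_greatestFib_add_one N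
      rwa [hgk] at this
    have hfp : 0 < Nat.fib (k + 2) := Nat.fib_pos.2 (by omega)
    set m := N - Nat.fib (k + 2) with hm
    have hmlt : m < N := by omega
    obtain ⟨d', hd'⟩ := ih m hmlt
    have hmfib : m < Nat.fib (k + 1) := by
      have h3 : Nat.fib (k + 3) = Nat.fib (k + 1) + Nat.fib (k + 2) :=
        Nat.fib_add_two (n := k + 1)
      omega
    have hsmall : ∀ j, d' j = 1 → j + 2 < k + 1 := by
      intro j hj
      by_contra h
      have hmono : Nat.fib (k + 1) ≤ Nat.fib (j + 2) := Nat.fib_mono (by omega)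
      have := isZeck_le hd' j hj
      omega
    have hd'le := hd'.1
    have hd'k : d' k = 0 := by
      have := hsmall k
      have := hd'le k
      omega
    refine ⟨fun i => if i = k then 1 else d' i, ?_, ?_, ?_, ?_⟩
    · intro i; dsimp only; split
      · exact le_refl 1
      · exact hd'le i
    · intro i; dsimp only
      by_cases hik : i = k
      · rw [if_pos hik, if_neg (by omega : ¬ i + 1 = k)]
        rintro ⟨-, hc⟩
        have := hsmall (i + 1) hc
        omega
      · rw [if_neg hik]
        by_cases hik1 : i + 1 = k
        · rw [if_pos hik1]
          rintro ⟨hc, -⟩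
          have := hsmall i hc
          omega
        · rw [if_neg hik1]
          exact hd'.2.1 i
    · refine (Set.finite_Iio (k + 1)).subset fun i hi => ?_
      simp only [Function.mem_support] at hi
      simp only [Set.mem_Iio]
      by_contra h
      have hik : i ≠ k := by omega
      rw [if_neg hik] at hi
      rcases Nat.lt_or_ge (d' i) 1 with h' | h'
      · omega
      · have : d' i = 1 := le_antisymm (hd'le i) h'
        have := hsmall i this
        omega
    · have hsupp : (Function.support fun i =>
          (if i = k then 1 else d' i) * Nat.fib (i + 2)) ⊆ ↑(range (k + 1)) := by
        intro i hi
        simp only [Function.mem_support] at hi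
        simp only [Finset.coe_range, Set.mem_Iio]
        by_contra h
        have hik : i ≠ k := by omega
        rw [if_neg hik] at hi
        have : d' i ≠ 0 := fun h0 => hi (by simp [h0])
        have : d' i = 1 := by have := hd'le i; omega
        have := hsmall i this
        omega
      have hsupp' : (Function.support fun i => d' i * Nat.fib (i + 2)) ⊆ ↑(range (k + 1)) := by
        intro i hi
        simp only [Function.mem_support] at hi
        simp only [Finset.coe_range, Set.mem_Iio]
        have : d' i ≠ 0 := fun h0 => hi (by simp [h0])
        have : d' i = 1 := by have := hd'le i; omega
        have := hsmall i this
        omega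
      rw [finsum_eq_sum_of_support_subset _ hsupp]
      have hm' : m = ∑ i ∈ range (k + 1), d' i * Nat.fib (i + 2) := by
        rw [hd'.2.2.2, finsum_eq_sum_of_support_subset _ hsupp']
      have hpt : ∀ i ∈ range (k + 1),
          (if i = k then 1 else d' i) * Nat.fib (i + 2)
            = d' i * Nat.fib (i + 2) + (if i = k then Nat.fib (k + 2) else 0) := by
        intro i _
        rcases eq_or_ne i k with rfl | hik
        · simp [hd'k]
        · simp [hik]
      rw [Finset.sum_congr rfl hpt, Finset.sum_add_distrib, ← hm',
        Finset.sum_ite_eq' (range (k + 1)) k (fun _ => Nat.fib (k + 2)),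
        if_pos (Finset.self_mem_range_succ k)]
      omega

/-- All the Wythoff facts needed, for `n ≥ 1`. -/
lemma wythoff (n : ℕ) (hn : 1 ≤ n) : ∃ a : ℕ, 1 ≤ a ∧ A n = a ∧ B n = n + a ∧
    A (A n) = n + a - 1 ∧ ((n + a : ℕ) : ℝ) < (n : ℝ) * phi ^ 2 ∧
      (n : ℝ) * phi ^ 2 < ((n + a : ℕ) : ℝ) + 1 := by
  have hφ1 : (1:ℝ) < φ := one_lt_goldenRatio
  have hn1 : (1:ℝ) ≤ (n : ℝ) := by exact_mod_cast hn
  have hirr : Irrational ((n : ℝ) * φ) := by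
    simpa [mul_comm] using goldenRatio_irrational.natCast_mul (m := n) (by omega)
  set af := ⌊(n : ℝ) * phi⌋ with haf
  have h2 : (n : ℝ) * phi < af + 1 := Int.lt_floor_add_one _
  have h1 : (af : ℝ) < (n : ℝ) * phi := by
    refine lt_of_le_of_ne (Int.floor_le _) ?_
    rw [phi_eq]
    exact (hirr.ne_int af).symm
  rw [phi_eq] at h1 h2 haf
  have haf1 : 1 ≤ af := by
    rw [haf, Int.le_floor]
    push_cast
    nlinarith
  have hatn : ((af.toNat : ℕ) : ℝ) = (af : ℝ) := by
    have : (af.toNat : ℤ) = af := Int.toNat_of_nonneg (by omega)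
    exact_mod_cast congrArg (fun z : ℤ => (z : ℝ)) this
  have hsub : (n : ℝ) * φ ^ 2 = (n : ℝ) * φ + n := by linear_combination (n : ℝ) * goldenRatio_sq
  have hAn : A n = af.toNat := by rw [A, phi_eq, ← haf]
  refine ⟨af.toNat, by omega, hAn, ?_, ?_, ?_, ?_⟩
  · -- B n = n + af.toNat
    have hfl : ⌊(n : ℝ) * phi ^ 2⌋ = n + af := by
      rw [phi_eq, Int.floor_eq_iff]
      constructor
      · push_cast; linarith
      · push_cast; linarith
    rw [B, hfl]
    omega
  · -- A (A n) = n + af.toNat - 1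
    rw [hAn]
    have hf0 : 0 < (n : ℝ) * φ - af := by linarith
    have hf1 : (n : ℝ) * φ - af < 1 := by linarith
    have hp1 : (0:ℝ) < φ - 1 := by linarith
    have hq : (0:ℝ) < (1 - ((n : ℝ) * φ - af)) * (φ - 1) :=
      mul_pos (by linarith) hp1
    have hq2 : (0:ℝ) < ((n : ℝ) * φ - af) * (φ - 1) := mul_pos hf0 hp1
    have hφ2 : φ < 2 := goldenRatio_lt_two
    have key : ((n : ℝ) * φ - af) * (φ - 1) < 1 := by nlinarith
    have hfl2 : ⌊((af.toNat : ℕ) : ℝ) * phi⌋ = n + af - 1 := by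
      rw [phi_eq, Int.floor_eq_iff]
      rw [hatn]
      constructor
      · push_cast; nlinarith [key, hsub]
      · push_cast; nlinarith [hq2, hsub]
    rw [A, hfl2]
    omega
  · rw [phi_eq]; push_cast; rw [hatn]; linarith
  · rw [phi_eq]; push_cast; rw [hatn]; linarith

/-- The numbers whose Zeckendorf expansion ends in digit d₀ = 1 are exactly the
numbers A(A(n)) = ⌊nphi⌋ + n − 1, n ≥ 1; equivalently A∘A = B − 1. -/
theorem zeck_ends_in_1 :
    (∀ N : ℕ, (∃ d : ℕ → ℕ, IsZeck N d ∧ d 0 = 1) ↔ ∃ n : ℕ, 1 ≤ n ∧ N = A (A n)) ∧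
      ∀ n : ℕ, 1 ≤ n → (A (A n) : ℤ) = (A n : ℤ) + n - 1 ∧ A (A n) = B n - 1 := by
  have hφ2pos : (0:ℝ) < φ ^ 2 := by nlinarith [goldenRatio_pos]
  constructor
  · intro N
    constructor
    · rintro ⟨d, hz, hd0⟩
      obtain ⟨hd1, hd2, hd3, hd4⟩ := hz
      -- bound the support
      obtain ⟨K, hK⟩ : ∃ K, ∀ i ∈ Function.support d, i < K + 2 := by
        rcases Set.eq_empty_or_nonempty (Function.support d) with he | hne
        · exact ⟨0, fun i hi => by rw [he] at hi; exact absurd hi (Set.notMem_empty i)⟩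
        · obtain ⟨K0, hK0⟩ := hd3.bddAbove
          exact ⟨K0, fun i hi => by have := hK0 hi; omega⟩
      have hsupp : (Function.support fun i => d i * Nat.fib (i + 2)) ⊆ ↑(range (K + 2)) := by
        intro i hi
        simp only [Function.mem_support] at hi
        simp only [Finset.coe_range, Set.mem_Iio]
        exact hK i (fun h0 => hi (by simp [h0]))
      have hNs : (N : ℝ) = ∑ i ∈ range (K + 2), (d i : ℝ) * (Nat.fib (i + 2) : ℝ) := by
        rw [hd4, finsum_eq_sum_of_support_subset _ hsupp]
        push_cast
        rfl
      obtain ⟨nz, hid⟩ := key_identity N d (K + 2) hNs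
      have hd1' : d 1 = 0 := by
        have h01 : ¬(d 0 = 1 ∧ d 1 = 1) := hd2 0
        have := hd1 1
        omega
      obtain ⟨hv1, hv2⟩ := val_one d hd1 hd0 hd1' K
      have hnz := hid nz
      simp only [sub_self, Int.cast_zero, zero_mul, zero_add] at hnz
      have hb1 : (N : ℝ) + 1 < (nz : ℝ) * φ ^ 2 := by linarith
      have hb2 : (nz : ℝ) * φ ^ 2 < (N : ℝ) + 2 := by linarith
      have hnzpos : 0 < nz := by
        have h0 : (0:ℝ) < (nz : ℝ) := by
          by_contra h
          push_neg at h
          nlinarith [Nat.cast_nonneg (α := ℝ) N]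
        exact_mod_cast h0
      refine ⟨nz.toNat, by omega, ?_⟩
      have hcast : ((nz.toNat : ℕ) : ℝ) = (nz : ℝ) := by
        have : (nz.toNat : ℤ) = nz := Int.toNat_of_nonneg (by omega)
        exact_mod_cast congrArg (fun z : ℤ => (z : ℝ)) this
      obtain ⟨a, ha1, hA, hB, hAA, hl, hu⟩ := wythoff nz.toNat (by omega)
      -- show B nz.toNat = N + 1
      have hBN : nz.toNat + a = N + 1 := by
        have hun : (((nz.toNat + a : ℕ)) : ℝ) < (N : ℝ) + 2 := by
          rw [phi_eq] at hl; rw [hcast] at hl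
          calc (((nz.toNat + a : ℕ)) : ℝ) < (nz:ℝ) * φ ^ 2 := hl
            _ < (N : ℝ) + 2 := hb2
        have hln : ((N : ℝ)) + 1 < (((nz.toNat + a : ℕ)) : ℝ) + 1 := by
          rw [phi_eq] at hu; rw [hcast] at hu
          calc ((N : ℝ)) + 1 < (nz:ℝ) * φ ^ 2 := hb1
            _ < (((nz.toNat + a : ℕ)) : ℝ) + 1 := hu
        have h1' : (nz.toNat + a : ℕ) < N + 2 := by exact_mod_cast hun
        have h2' : N + 1 < (nz.toNat + a : ℕ) + 1 := by exact_mod_cast hln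
        omega
      omega
    · rintro ⟨n, hn, hNeq⟩
      obtain ⟨a, ha1, hA, hB, hAA, hl, hu⟩ := wythoff n hn
      have hN1 : N + 1 = n + a := by omega
      obtain ⟨d, hz⟩ := zeck_exists N
      refine ⟨d, hz, ?_⟩
      by_contra hne
      have hd0 : d 0 = 0 := by have := hz.1 0; omega
      obtain ⟨hd1, hd2, hd3, hd4⟩ := hz
      obtain ⟨K, hK⟩ : ∃ K, ∀ i ∈ Function.support d, i < K + 2 := by
        rcases Set.eq_empty_or_nonempty (Function.support d) with he | hne'
        · exact ⟨0, fun i hi => by rw [he] at hi; exact absurd hi (Set.notMem_empty i)⟩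
        · obtain ⟨K0, hK0⟩ := hd3.bddAbove
          exact ⟨K0, fun i hi => by have := hK0 hi; omega⟩
      have hsupp : (Function.support fun i => d i * Nat.fib (i + 2)) ⊆ ↑(range (K + 2)) := by
        intro i hi
        simp only [Function.mem_support] at hi
        simp only [Finset.coe_range, Set.mem_Iio]
        exact hK i (fun h0 => hi (by simp [h0]))
      have hNs : (N : ℝ) = ∑ i ∈ range (K + 2), (d i : ℝ) * (Nat.fib (i + 2) : ℝ) := by
        rw [hd4, finsum_eq_sum_of_support_subset _ hsupp]
        push_cast
        rfl
      obtain ⟨nz, hid⟩ := key_identity N d (K + 2) hNs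
      obtain ⟨hv1, hv2⟩ := val_zero d hd1 hd0 K
      have hm := hid (n : ℤ)
      -- bounds on n·φ²
      rw [phi_eq] at hl hu
      have hcast2 : ((N : ℝ)) + 1 = (((n + a : ℕ)) : ℝ) := by exact_mod_cast hN1
      have hb1 : (N : ℝ) + 1 < (n : ℝ) * φ ^ 2 := by rw [hcast2]; exact hl
      have hb2 : (n : ℝ) * φ ^ 2 < (N : ℝ) + 2 := by linarith [hu, hcast2]
      have hmc : (((n : ℤ) : ℝ)) = (n : ℝ) := by push_cast; rfl
      rw [hmc] at hm
      have hc1 : (((n : ℤ) - nz : ℤ) : ℝ) * φ ^ 2 < 0 := by linarith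
      have hc2 : -φ ^ 2 < (((n : ℤ) - nz : ℤ) : ℝ) * φ ^ 2 := by linarith
      have hcc1 : (((n : ℤ) - nz : ℤ) : ℝ) < 0 := by
        by_contra h
        push_neg at h
        nlinarith
      have hcc2 : (-1 : ℝ) < (((n : ℤ) - nz : ℤ) : ℝ) := by
        by_contra h
        push_neg at h
        nlinarith
      have hfin1 : (n : ℤ) - nz < 0 := by exact_mod_cast hcc1
      have hfin2 : (-1 : ℤ) < (n : ℤ) - nz := by exact_mod_cast hcc2
      omega
  · intro n hn
    obtain ⟨a, ha1, hA, hB, hAA, hl, hu⟩ := wythoff n hn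
    constructor
    · rw [hAA, hA]
      omega
    · omega
end
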